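/- Let e_α := (−sin α, cos α), J(x,y) = (−y,x), let p : ℝ → ℝ be a C² function, and define γ(α) := p'(α)e_α − p(α)Je_α. Then for all α₁, α₂ ∈ ℝ: ω(γ'(α₁),γ'(α₂)) = (p''(α₁) + p(α₁))(p''(α₂) + p(α₂)) sin(α₂ − α₁). In particular, if p''(α) + p(α) > 0 for all α, then ω(γ'(α₁),γ'(α₂)) > 0 whenever 0 < α₂ − α₁ < π (the twist condition). -/

import Mathlib

open Real

/-- The standard area form (determinant) on `ℝ²`. -/
def omega2 (u v : ℝ × ℝ) : ℝ := u.1 * v.2 - u.2 * v.1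

/-- The unit vector forming an angle `α` with the vertical direction `(0,1)`. -/
noncomputable def eVec (α : ℝ) : ℝ × ℝ := (-Real.sin α, Real.cos α)

/-- Rotation by `π/2` in the positive direction. -/
def Jrot (v : ℝ × ℝ) : ℝ × ℝ := (-v.2, v.1)

theorem stmt_8 (p : ℝ → ℝ) (hp : ContDiff ℝ 2 p)
    (γ : ℝ → ℝ × ℝ)
    (hγ : ∀ α : ℝ, γ α = deriv p α • eVec α - p α • Jrot (eVec α)) :
    (∀ α₁ α₂ : ℝ, omega2 (deriv γ α₁) (deriv γ α₂) =
      (deriv (deriv p) α₁ + p α₁) * (deriv (deriv p) α₂ + p α₂) * Real.sin (α₂ - α₁)) ∧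
    ((∀ α : ℝ, 0 < deriv (deriv p) α + p α) →
      ∀ α₁ α₂ : ℝ, 0 < α₂ - α₁ → α₂ - α₁ < π →
        0 < omega2 (deriv γ α₁) (deriv γ α₂)) := by
  have hp2 : ContDiff ℝ (1+1) p := by exact hp
  have hp' := (contDiff_succ_iff_deriv.mp hp2)
  have hd1 : Differentiable ℝ p := hp'.1
  have hd2 : Differentiable ℝ (deriv p) := hp'.2.2.differentiable one_ne_zero
  have key : ∀ α : ℝ, deriv γ α =
      ((deriv (deriv p) α + p α) * (-Real.sin α),
       (deriv (deriv p) α + p α) * Real.cos α) := by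
    intro α
    have hγ' : γ = fun α => (deriv p α * (-Real.sin α) + p α * Real.cos α,
        deriv p α * Real.cos α + p α * Real.sin α) := by
      funext x
      rw [hγ x]
      simp [eVec, Jrot, Prod.ext_iff]
    have h1 : HasDerivAt (fun x => deriv p x * (-Real.sin x) + p x * Real.cos x)
        ((deriv (deriv p) α + p α) * (-Real.sin α)) α := by
      have := (((hd2 α).hasDerivAt.fun_mul ((Real.hasDerivAt_sin α).fun_neg)).fun_add
        ((hd1 α).hasDerivAt.fun_mul (Real.hasDerivAt_cos α)))
      refine this.congr_deriv ?_
      ring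
    have h2' : HasDerivAt (fun x => deriv p x * Real.cos x + p x * Real.sin x)
        ((deriv (deriv p) α + p α) * Real.cos α) α := by
      have := (((hd2 α).hasDerivAt.fun_mul (Real.hasDerivAt_cos α)).fun_add
        ((hd1 α).hasDerivAt.fun_mul (Real.hasDerivAt_sin α)))
      refine this.congr_deriv ?_
      ring
    rw [hγ']
    exact (h1.prodMk h2').deriv
  constructor
  · intro α₁ α₂
    rw [key α₁, key α₂]
    simp only [omega2]
    have : Real.sin (α₂ - α₁) = Real.sin α₂ * Real.cos α₁ - Real.cos α₂ * Real.sin α₁ :=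
      Real.sin_sub α₂ α₁
    rw [this]
    ring
  · intro hpos α₁ α₂ h1 h2
    rw [key α₁, key α₂]
    simp only [omega2]
    have hs : 0 < Real.sin (α₂ - α₁) := Real.sin_pos_of_pos_of_lt_pi h1 h2
    have : ((deriv (deriv p) α₁ + p α₁) * (-Real.sin α₁)) * ((deriv (deriv p) α₂ + p α₂) * Real.cos α₂)
        - ((deriv (deriv p) α₁ + p α₁) * Real.cos α₁) * ((deriv (deriv p) α₂ + p α₂) * (-Real.sin α₂))
        = (deriv (deriv p) α₁ + p α₁) * (deriv (deriv p) α₂ + p α₂) * Real.sin (α₂ - α₁) := by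
      rw [Real.sin_sub]; ring
    rw [this]
    exact mul_pos (mul_pos (hpos α₁) (hpos α₂)) hs
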